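/- Let G be a finite simple graph with clique number ω, let M be the adjacency matrix of G under some linear ordering of its vertices, and let D be a symmetric division of M. Suppose that, for some integer d ≥ 1, M has no d-almost mixed minor that is a coarsening of D. Then the clique number of the horizontal compression G^H_D satisfies ω(G^H_D) ≤ 2 · binom(ω + d − 2, d − 1), and consequently ω(G^H_D) ≤ 2ω^(d−1). -/

import Mathlib

namespace TwPaper


/-- A `{0,1}`-matrix with `m` rows and `n` columns, entries modeled as `Bool`. -/
abbrev BMatrix (m n : ℕ) := Matrix (Fin m) (Fin n) Bool

/-- The submatrix of `M` given by rows `R` and columns `C` is horizontal: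
all its rows are constant. -/
def Horizontal {m n : ℕ} (M : BMatrix m n) (R : Set (Fin m)) (C : Set (Fin n)) : Prop :=
  ∀ i ∈ R, ∀ j ∈ C, ∀ j' ∈ C, M i j = M i j'

/-- The submatrix of `M` given by rows `R` and columns `C` is vertical:
all its columns are constant. -/
def Vertical {m n : ℕ} (M : BMatrix m n) (R : Set (Fin m)) (C : Set (Fin n)) : Prop :=
  ∀ j ∈ C, ∀ i ∈ R, ∀ i' ∈ R, M i j = M i' j

/-- The submatrix of `M` given by rows `R` and columns `C` is mixed:
neither horizontal nor vertical. -/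
def Mixed {m n : ℕ} (M : BMatrix m n) (R : Set (Fin m)) (C : Set (Fin n)) : Prop :=
  ¬ Horizontal M R C ∧ ¬ Vertical M R C

/-- The submatrix of `M` given by rows `R` and columns `C` is constant `0`. -/
def ConstantZero {m n : ℕ} (M : BMatrix m n) (R : Set (Fin m)) (C : Set (Fin n)) : Prop :=
  ∀ i ∈ R, ∀ j ∈ C, M i j = false

/-- A `d`-division of an `m × n` matrix: a partition of the rows into `d` contiguous
nonempty blocks, and likewise for columns.  It is encoded by the monotone surjective
maps sending a row (resp. column) to the index of its block. -/
structure Division (m n d : ℕ) where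
  row : Fin m → Fin d
  col : Fin n → Fin d
  row_mono : Monotone row
  col_mono : Monotone col
  row_surj : Function.Surjective row
  col_surj : Function.Surjective col

/-- The `i`-th row block of a division. -/
def Division.rowBlock {m n d : ℕ} (D : Division m n d) (i : Fin d) : Set (Fin m) :=
  {a | D.row a = i}

/-- The `j`-th column block of a division. -/
def Division.colBlock {m n d : ℕ} (D : Division m n d) (j : Fin d) : Set (Fin n) :=
  {b | D.col b = j}

/-- The zone `D[i,j]` of the division `D` of `M` is mixed. -/
def Division.ZoneMixed {m n d : ℕ} (D : Division m n d) (M : BMatrix m n) (i j : Fin d) : Prop :=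
  Mixed M (D.rowBlock i) (D.colBlock j)

/-- A `d`-division is a `d`-almost mixed minor if every off-diagonal zone is mixed. -/
def IsAlmostMixedMinor {m n d : ℕ} (M : BMatrix m n) (D : Division m n d) : Prop :=
  ∀ i j : Fin d, i ≠ j → D.ZoneMixed M i j

/-- A `d`-division is a `d`-mixed minor if every zone is mixed. -/
def IsMixedMinor {m n d : ℕ} (M : BMatrix m n) (D : Division m n d) : Prop :=
  ∀ i j : Fin d, D.ZoneMixed M i j

/-- `M` is `d`-almost mixed-free: it has no `d`-almost mixed minor. -/
def AlmostMixedFree {m n : ℕ} (d : ℕ) (M : BMatrix m n) : Prop :=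
  ¬ ∃ D : Division m n d, IsAlmostMixedMinor M D

/-- `M` is `d`-mixed-free: it has no `d`-mixed minor. -/
def MixedFree {m n : ℕ} (d : ℕ) (M : BMatrix m n) : Prop :=
  ¬ ∃ D : Division m n d, IsMixedMinor M D

/-- A graphic matrix: symmetric with zero diagonal. -/
def Graphic {n : ℕ} (M : BMatrix n n) : Prop :=
  (∀ i j, M i j = M j i) ∧ (∀ i, M i i = false)

/-- A division of a square matrix is symmetric if rows and columns are
partitioned in exactly the same way. -/
def Division.Symm {n d : ℕ} (D : Division n n d) : Prop := D.row = D.col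

/-- `L` is a coarsening of `D`: every row (resp. column) block of `L` is a union of
consecutive row (resp. column) blocks of `D`. -/
def Coarsens {m n d e : ℕ} (L : Division m n e) (D : Division m n d) : Prop :=
  (∀ a a' : Fin m, D.row a = D.row a' → L.row a = L.row a') ∧
  (∀ b b' : Fin n, D.col b = D.col b' → L.col b = L.col b')

/-- The zone is horizontal and not constant `0`. -/
def HorizNonzero {m n : ℕ} (M : BMatrix m n) (R : Set (Fin m)) (C : Set (Fin n)) : Prop :=
  Horizontal M R C ∧ ¬ ConstantZero M R C

/-- The zone is vertical and not constant `0`. -/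
def VertNonzero {m n : ℕ} (M : BMatrix m n) (R : Set (Fin m)) (C : Set (Fin n)) : Prop :=
  Vertical M R C ∧ ¬ ConstantZero M R C

/-- The horizontal compression `G^H_D` of a graphic matrix `M` along a symmetric
division `D` with `s` blocks: vertices are the blocks, and `i j` (for `i < j`) are
adjacent iff the zone `D[i,j]` is horizontal and not constant `0`. -/
def horizCompression {n s : ℕ} (M : BMatrix n n) (D : Division n n s) : SimpleGraph (Fin s) :=
  SimpleGraph.fromRel (fun i j => i < j ∧ HorizNonzero M (D.rowBlock i) (D.colBlock j))

/-- The vertical compression `G^V_D`. -/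
def vertCompression {n s : ℕ} (M : BMatrix n n) (D : Division n n s) : SimpleGraph (Fin s) :=
  SimpleGraph.fromRel (fun i j => i < j ∧ VertNonzero M (D.rowBlock i) (D.colBlock j))

/-- The mixed compression `G^M_D`: `i ≠ j` are adjacent iff the zone `D[i,j]` is mixed. -/
def mixedCompression {n s : ℕ} (M : BMatrix n n) (D : Division n n s) : SimpleGraph (Fin s) :=
  SimpleGraph.fromRel (fun i j => D.ZoneMixed M i j)

open Classical in
/-- The adjacency matrix of a graph on `Fin s`, rows and columns in the natural order. -/
noncomputable def graphMatrix {s : ℕ} (G : SimpleGraph (Fin s)) : BMatrix s s :=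
  fun i j => if G.Adj i j then true else false

open Classical in
/-- The adjacency matrix of `G` under the vertex ordering given by the
enumeration `e` of its vertices. -/
noncomputable def adjMatrix {V : Type*} [Fintype V] (G : SimpleGraph V)
    (e : Fin (Fintype.card V) ≃ V) : BMatrix (Fintype.card V) (Fintype.card V) :=
  fun i j => if G.Adj (e i) (e j) then true else false

/-- `G` admits, under some linear ordering of its vertices, a `d`-almost mixed-free
adjacency matrix. -/
def AdmitsAMFree {V : Type*} [Fintype V] (d : ℕ) (G : SimpleGraph V) : Prop :=
  ∃ e : Fin (Fintype.card V) ≃ V, AlmostMixedFree d (adjMatrix G e)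


section Abstract

variable {W : Type} (Vp : ℕ → W → Prop) (ok : W → ℕ → Prop)

def IsChainL (l : List (ℕ × W)) : Prop :=
  (∀ x ∈ l, Vp x.1 x.2) ∧ l.Pairwise (fun x y => x.1 < y.1 ∧ ok x.2 y.1)

def ChainBdd (lo hi g : ℕ) : Prop :=
  ∀ l : List (ℕ × W), IsChainL Vp ok l → (∀ x ∈ l, lo ≤ x.1 ∧ x.1 < hi) → l.length ≤ g

def Lnk (A B : Finset ℕ) : Prop :=
  ∃ a ∈ A, ∃ v, Vp a v ∧ ∃ c ∈ B, ∃ c' ∈ B, ok v c ∧ ¬ ok v c'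

def IsGrouping (lo hi d : ℕ) (f : ℕ → ℕ) : Prop :=
  f 0 = lo ∧ f d = hi ∧ (∀ q, q < d → f q < f (q + 1)) ∧
  ∀ p q, p < q → q < d →
    Lnk Vp ok (Finset.Ico (f p) (f (p + 1))) (Finset.Ico (f q) (f (q + 1)))

lemma chainBdd_mono {lo hi g lo' hi' g' : ℕ} (h : ChainBdd Vp ok lo hi g)
    (hlo : lo ≤ lo') (hhi : hi' ≤ hi) (hg : g ≤ g') : ChainBdd Vp ok lo' hi' g' := by
  intro l hl hmem
  exact le_trans (h l hl (fun x hx => ⟨le_trans hlo (hmem x hx).1,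
    lt_of_lt_of_le (hmem x hx).2 hhi⟩)) hg

lemma lnk_mono {A B A' B' : Finset ℕ} (h : Lnk Vp ok A B) (hA : A ⊆ A') (hB : B ⊆ B') :
    Lnk Vp ok A' B' := by
  obtain ⟨a, ha, v, hv, c, hc, c', hc', h1, h2⟩ := h
  exact ⟨a, hA ha, v, hv, c, hB hc, c', hB hc', h1, h2⟩

lemma grouping_mono_aux {d : ℕ} {f : ℕ → ℕ} (hf : ∀ q, q < d → f q < f (q + 1)) :
    ∀ q q', q ≤ q' → q' ≤ d → f q ≤ f q' := by
  intro q q' hqq' hq'd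
  induction q' with
  | zero =>
    have : q = 0 := by omega
    simp [this]
  | succ m ih =>
    rcases Nat.eq_or_lt_of_le hqq' with h | h
    · exact h ▸ le_rfl
    · exact le_trans (ih (by omega) (by omega)) (le_of_lt (hf m (by omega)))

/-- The core combinatorial lemma. -/
lemma core (k : ℕ)
    (H0 : ∀ a, a < k → ∃ v, Vp a v)
    (H1 : ∀ a c, a < c → c < k → ∃ v, Vp a v ∧ ok v c) :
    ∀ N d g lo hi, d + g ≤ N → 1 ≤ d → 1 ≤ g → hi ≤ k →
      ChainBdd Vp ok lo hi g → (¬ ∃ f, IsGrouping Vp ok lo hi d f) →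
      hi - lo ≤ 2 * Nat.choose (g + d - 2) (d - 1) - 1 := by
  intro N
  induction N with
  | zero => intro d g lo hi hN hd hg; omega
  | succ N ih =>
    intro d g lo hi hN hd hg hhik hCB hNG
    -- case d = 1
    rcases Nat.eq_or_lt_of_le hd with hd1 | hd2
    · -- d = 1 : no grouping forces hi ≤ lo
      have : ¬ lo < hi := by
        intro hlt
        apply hNG
        refine ⟨fun q => if q = 0 then lo else hi, by simp, by simp [← hd1], ?_, ?_⟩
        · intro q hq
          have : q = 0 := by omega
          simp [this, hlt]
        · intro p q hpq hq
          omega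
      have h1 : 1 ≤ 2 * Nat.choose (g + d - 2) (d - 1) - 1 := by
        rw [← hd1]
        simp
      omega
    · -- d ≥ 2
      rcases Nat.eq_or_lt_of_le hg with hg1 | hg2
      · -- g = 1 : chains of length 2 exist if two positions
        have hle : hi ≤ lo + 1 := by
          by_contra hcon
          push_neg at hcon
          have hlo1k : lo + 1 < k := by omega
          obtain ⟨v, hv, hov⟩ := H1 lo (lo + 1) (by omega) hlo1k
          obtain ⟨w, hw⟩ := H0 (lo + 1) hlo1k
          have := hCB [(lo, v), (lo + 1, w)]
            ⟨by intro x hx; simp at hx; rcases hx with h | h <;> simp [h, hv, hw], by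
              refine List.pairwise_cons.2 ⟨?_, List.pairwise_singleton _ _⟩
              intro y hy
              simp at hy
              simp [hy, hov]⟩
            (by intro x hx; simp at hx; rcases hx with h | h <;> simp [h] <;> omega)
          simp at this
          omega
        have h1 : Nat.choose (g + d - 2) (d - 1) = 1 := by
          have : g + d - 2 = d - 1 := by omega
          rw [this, Nat.choose_self]
        omega
      · -- d ≥ 2, g ≥ 2
        set T : Set ℕ := {q | ChainBdd Vp ok q hi (g - 1)} with hT
        have hhiT : hi ∈ T := by
          intro l hl hmem
          rcases l with _ | ⟨x, l'⟩
          · simp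
          · exfalso
            have := hmem x (by simp)
            omega
        set qlo := sInf T with hqlo
        have hqloT : ChainBdd Vp ok qlo hi (g - 1) := Nat.sInf_mem ⟨hi, hhiT⟩
        have hqlohi : qlo ≤ hi := Nat.sInf_le hhiT
        by_cases hcase : qlo ≤ lo
        · -- whole interval has chains ≤ g - 1
          have hCB' : ChainBdd Vp ok lo hi (g - 1) :=
            chainBdd_mono Vp ok hqloT hcase le_rfl le_rfl
          have := ih d (g - 1) lo hi (by omega) hd (by omega) hhik hCB' hNG
          have hmono : Nat.choose (g - 1 + d - 2) (d - 1) ≤ Nat.choose (g + d - 2) (d - 1) :=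
            Nat.choose_le_choose _ (by omega)
          omega
        · push_neg at hcase  -- lo < qlo
          set y := qlo - 1 with hy
          have hylo : lo ≤ y := by omega
          have hyhi : y < hi := by omega
          -- y ∉ T : there is a long chain in [y, hi)
          have hyNT : ¬ ChainBdd Vp ok y hi (g - 1) := by
            intro h
            have : qlo ≤ y := Nat.sInf_le h
            omega
          rw [ChainBdd] at hyNT
          push_neg at hyNT
          obtain ⟨l, hlch, hlmem, hllen⟩ := hyNT
          -- Claim 1: no (d-1)-grouping of [lo, y)
          have hP : ¬ ∃ f, IsGrouping Vp ok lo y (d - 1) f := by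
            rintro ⟨f', hf'⟩
            obtain ⟨hf0, hfd, hfs, hfl⟩ := hf'
            apply hNG
            have hfeq : ∀ r, (fun q => if q < d then f' q else hi) r
                = if r < d then f' r else hi := fun _ => rfl
            refine ⟨fun q => if q < d then f' q else hi,
              by simp only [hfeq]; rw [if_pos (by omega : 0 < d)]; exact hf0,
              by simp only [hfeq]; rw [if_neg (lt_irrefl d)], ?_, ?_⟩
            · intro q hq
              simp only [hfeq]
              by_cases h1 : q + 1 < d
              · rw [if_pos hq, if_pos h1]
                exact hfs q (by omega)
              · have hqd : q = d - 1 := by omega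
                rw [if_pos hq, if_neg h1]
                have : f' q = y := by rw [← hfd, hqd]
                omega
            · intro p q hpq hqd
              simp only [hfeq]
              have hp1 : p + 1 < d := by omega
              have hpd : p < d := by omega
              by_cases hq1 : q + 1 < d
              · have hqq : q < d := by omega
                simpa [hpd, hp1, hqq, hq1] using hfl p q hpq (by omega)
              · -- q = d - 1, group is [y, hi)
                have hqd1 : q = d - 1 := by omega
                have hfq : f' q = y := by rw [← hfd, hqd1]
                simp only [if_pos hpd, if_pos hp1, if_pos hqd, if_neg hq1]
                rw [hfq]
                -- a := f' p
                have hap : f' p ∈ Finset.Ico (f' p) (f' (p + 1)) := by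
                  simp [hfs p (by omega)]
                have hay : f' p < y := by
                  have h1 : f' p < f' (p + 1) := hfs p (by omega)
                  have h2 : f' (p + 1) ≤ f' (d - 1) :=
                    grouping_mono_aux hfs (p + 1) (d - 1) (by omega) (by omega)
                  rw [← hfd]
                  omega
                obtain ⟨v, hVv, hokv⟩ := H1 (f' p) y hay (by omega)
                have hlofp : lo ≤ f' p := by
                  rw [← hf0]
                  exact grouping_mono_aux hfs 0 p (by omega) (by omega)
                by_contra hnl
                -- v covers all of [y, hi)
                have hcov : ∀ c', c' ∈ Finset.Ico y hi → ok v c' := by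
                  intro c' hc'
                  by_contra hnok
                  exact hnl ⟨f' p, hap, v, hVv, y, Finset.mem_Ico.2 ⟨le_rfl, hyhi⟩,
                    c', hc', hokv, hnok⟩
                -- extended chain
                have hbig := hCB ((f' p, v) :: l)
                  ⟨by
                    intro x hx
                    rcases List.mem_cons.1 hx with h | h
                    · simp [h, hVv]
                    · exact hlch.1 x h, by
                    refine List.pairwise_cons.2 ⟨?_, hlch.2⟩
                    intro x hx
                    have hxm := hlmem x hx
                    constructor
                    · omega
                    · exact hcov x.1 (by simp; omega)⟩
                  (by
                    intro x hx
                    rcases List.mem_cons.1 hx with h | h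
                    · simp [h]; omega
                    · have := hlmem x h; omega)
                simp at hbig
                omega
          -- Claim 2: no d-grouping of [qlo, hi)
          have hQ : ¬ ∃ f, IsGrouping Vp ok qlo hi d f := by
            rintro ⟨f'', hf''⟩
            obtain ⟨hf0, hfd, hfs, hfl⟩ := hf''
            apply hNG
            have hfeq : ∀ r, (fun q => if q = 0 then lo else f'' q) r
                = if r = 0 then lo else f'' r := fun _ => rfl
            refine ⟨fun q => if q = 0 then lo else f'' q,
              by simp only [hfeq]; simp,
              by simp only [hfeq]; rw [if_neg (by omega : d ≠ 0)]; exact hfd, ?_, ?_⟩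
            · intro q hq
              simp only [hfeq]
              by_cases h0 : q = 0
              · subst h0
                rw [if_pos rfl, if_neg (by omega : (0:ℕ) + 1 ≠ 0)]
                have h1 := hfs 0 hq
                have h2 : f'' (0 + 1) = f'' 1 := by norm_num
                omega
              · rw [if_neg h0, if_neg (by omega : q + 1 ≠ 0)]
                exact hfs q hq
            · intro p q hpq hqd
              simp only [hfeq]
              have hq0 : q ≠ 0 := by omega
              have hq10 : q + 1 ≠ 0 := by omega
              by_cases hp0 : p = 0
              · subst hp0
                simp only [if_pos rfl, if_true, if_neg hq0, if_neg hq10, if_neg (by omega : (0:ℕ) + 1 ≠ 0)]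
                refine lnk_mono Vp ok (hfl 0 q hpq hqd) ?_ le_rfl
                apply Finset.Ico_subset_Ico _ le_rfl
                omega
              · simp only [if_neg hp0, if_neg hq0, if_neg hq10, if_neg (by omega : p + 1 ≠ 0)]
                exact hfl p q hpq hqd
          -- apply IH to both parts
          have hPb := ih (d - 1) g lo y (by omega) (by omega) hg (by omega)
            (chainBdd_mono Vp ok hCB le_rfl (by omega) le_rfl) hP
          have hQb := ih d (g - 1) qlo hi (by omega) hd (by omega) hhik hqloT hQ
          -- Pascal
          have hpascal : Nat.choose (g + d - 2) (d - 1)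
              = Nat.choose (g + d - 3) (d - 2) + Nat.choose (g + d - 3) (d - 1) := by
            have e1 : g + d - 2 = (g + d - 3) + 1 := by omega
            have e2 : d - 1 = (d - 2) + 1 := by omega
            rw [e1, e2]
            exact Nat.choose_succ_succ _ _
          have hA1 : 1 ≤ Nat.choose (g + d - 3) (d - 2) := Nat.choose_pos (by omega)
          have hB1 : 1 ≤ Nat.choose (g + d - 3) (d - 1) := Nat.choose_pos (by omega)
          have e3 : g + (d - 1) - 2 = g + d - 3 := by omega
          have e4 : (d - 1) - 1 = d - 2 := by omega
          have e5 : (g - 1) + d - 2 = g + d - 3 := by omega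
          rw [e3, e4] at hPb
          rw [e5] at hQb
          omega
end Abstract

lemma choose_add_le_pow : ∀ (kk m : ℕ), (m + kk).choose kk ≤ (m + 1) ^ kk := by
  intro kk
  induction kk with
  | zero => intro m; simp
  | succ k ihk =>
    intro m
    induction m with
    | zero => simp
    | succ m ihm =>
      have e : m + 1 + (k + 1) = (m + 1 + k) + 1 := by omega
      rw [e, Nat.choose_succ_succ]
      have h1 : (m + 1 + k).choose k ≤ (m + 2) ^ k := by
        have h := ihk (m + 1)
        have e2 : m + 1 + 1 = m + 2 := rfl
        rwa [e2] at h
      have h2 : (m + 1 + k).choose (k + 1) ≤ (m + 1) ^ (k + 1) := by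
        have e1 : m + 1 + k = m + (k + 1) := by omega
        rw [e1]
        exact ihm
      have h3 : (m + 1) ^ (k + 1) ≤ (m + 1) * (m + 2) ^ k := by
        rw [pow_succ, mul_comm]
        exact Nat.mul_le_mul_left _ (Nat.pow_le_pow_left (by omega) k)
      calc (m + 1 + k).choose k + (m + 1 + k).choose (k + 1)
          ≤ (m + 2) ^ k + (m + 1) * (m + 2) ^ k := Nat.add_le_add h1 (le_trans h2 h3)
        _ = (m + 2) ^ (k + 1) := by ring

lemma Mixed.swapSymm {n : ℕ} {M : BMatrix n n} {R C : Set (Fin n)}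
    (hsym : ∀ i j, M i j = M j i) (h : Mixed M R C) : Mixed M C R := by
  obtain ⟨hH, hV⟩ := h
  constructor
  · intro hH'
    apply hV
    intro j hj i hi i' hi'
    rw [hsym i j, hsym i' j]
    exact hH' j hj i hi i' hi'
  · intro hV'
    apply hH
    intro i hi j hj j' hj'
    rw [hsym i j, hsym i j']
    exact hV' i hi j hj j' hj'

/-- Let `G` be a finite simple graph with clique number `ω`, `M` its
adjacency matrix under some vertex ordering `e`, and `D` a symmetric division of `M`.
If, for some `d ≥ 1`, `M` has no `d`-almost mixed minor that is a coarsening of `D`,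
then the clique number of the horizontal compression satisfies
`ω(G^H_D) ≤ 2 * choose (ω + d - 2) (d - 1)`, and consequently `ω(G^H_D) ≤ 2 * ω^(d-1)`. -/
theorem clique_horiz_compression {V : Type} [Fintype V] (G : SimpleGraph V)
    (e : Fin (Fintype.card V) ≃ V) (d : ℕ) (hd : 1 ≤ d)
    {s : ℕ} (D : Division (Fintype.card V) (Fintype.card V) s) (hD : D.Symm)
    (hno : ¬ ∃ L : Division (Fintype.card V) (Fintype.card V) d,
      Coarsens L D ∧ IsAlmostMixedMinor (adjMatrix G e) L) :
    (horizCompression (adjMatrix G e) D).cliqueNum ≤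
        2 * Nat.choose (G.cliqueNum + d - 2) (d - 1) ∧
    (horizCompression (adjMatrix G e) D).cliqueNum ≤ 2 * G.cliqueNum ^ (d - 1) := by
  classical
  set M : BMatrix (Fintype.card V) (Fintype.card V) := adjMatrix G e with hM
  set ω := G.cliqueNum with hω
  have hMtrue : ∀ i j : Fin (Fintype.card V), M i j = true ↔ G.Adj (e i) (e j) := by
    intro i j
    show (if G.Adj (e i) (e j) then true else false) = true ↔ _
    by_cases h : G.Adj (e i) (e j) <;> simp [h]
  have hMsymm : ∀ i j : Fin (Fintype.card V), M i j = M j i := by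
    intro i j
    show (if G.Adj (e i) (e j) then true else false)
        = (if G.Adj (e j) (e i) then true else false)
    by_cases h : G.Adj (e i) (e j)
    · rw [if_pos h, if_pos h.symm]
    · rw [if_neg h, if_neg (fun h' => h h'.symm)]
  have key : ∀ (m : ℕ) (t : Finset (Fin s)),
      (horizCompression M D).IsNClique m t → m ≤ 2 * Nat.choose (ω + d - 2) (d - 1) := by
    intro m t ht
    rcases Nat.eq_zero_or_pos m with hm0 | hm1
    · rw [hm0]; exact Nat.zero_le _
    have hcard : t.card = m := ht.2
    set pos : Fin m ↪o Fin s := t.orderEmbOfFin hcard with hposdef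
    have hposmem : ∀ a : Fin m, pos a ∈ t := fun a => Finset.orderEmbOfFin_mem t hcard a
    have hposmono : StrictMono pos := pos.strictMono
    have hHN : ∀ a b : Fin m, a < b →
        Horizontal M (D.rowBlock (pos a)) (D.colBlock (pos b)) ∧
        ¬ ConstantZero M (D.rowBlock (pos a)) (D.colBlock (pos b)) := by
      intro a b hab
      have hne : pos a ≠ pos b := ne_of_lt (hposmono hab)
      have hadj := ht.1 (Finset.mem_coe.mpr (hposmem a)) (Finset.mem_coe.mpr (hposmem b)) hne
      unfold horizCompression at hadj
      rw [SimpleGraph.fromRel_adj] at hadj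
      rcases hadj.2 with h | h
      · exact h.2
      · exact absurd h.1 (not_lt.2 (le_of_lt (hposmono hab)))
    have hrepex : ∀ i : Fin s, ∃ x : Fin (Fintype.card V), D.col x = i := D.col_surj
    set rep : Fin s → Fin (Fintype.card V) := fun i => Classical.choose (hrepex i) with hrepdef
    have hrepspec : ∀ i, D.col (rep i) = i := fun i => Classical.choose_spec (hrepex i)
    have hrepmem : ∀ i, rep i ∈ D.colBlock i := fun i => hrepspec i
    set Vp : ℕ → Fin (Fintype.card V) → Prop := fun a v => ∃ h : a < m, D.row v = pos ⟨a, h⟩ with hVpdef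
    set ok : Fin (Fintype.card V) → ℕ → Prop :=
      fun v c => ∃ h : c < m, M v (rep (pos ⟨c, h⟩)) = true with hokdef
    have H0 : ∀ a, a < m → ∃ v, Vp a v := by
      intro a ha
      obtain ⟨v, hv⟩ := D.row_surj (pos ⟨a, ha⟩)
      exact ⟨v, ha, hv⟩
    have H1 : ∀ a c, a < c → c < m → ∃ v, Vp a v ∧ ok v c := by
      intro a c hac hc
      have ha : a < m := lt_trans hac hc
      obtain ⟨hHor, hNZ⟩ := hHN ⟨a, ha⟩ ⟨c, hc⟩ (Fin.mk_lt_mk.2 hac)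
      unfold ConstantZero at hNZ
      push_neg at hNZ
      obtain ⟨v, hvR, j, hjC, hMvj⟩ := hNZ
      have hMvj' : M v j = true := by
        cases hb : M v j
        · exact absurd hb hMvj
        · rfl
      refine ⟨v, ⟨ha, hvR⟩, hc, ?_⟩
      have := hHor v hvR (rep (pos ⟨c, hc⟩)) (hrepmem _) j hjC
      rw [this, hMvj']
    have hchain : ChainBdd Vp ok 0 m ω := by
      intro l hl hmem
      have hadjl : l.Pairwise (fun x y => G.Adj (e x.2) (e y.2)) := by
        refine List.Pairwise.imp_of_mem ?_ hl.2
        intro x y hx hy hxy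
        obtain ⟨hxk, hxblk⟩ := hl.1 x hx
        obtain ⟨hyk, hyblk⟩ := hl.1 y hy
        obtain ⟨hlt, hok2⟩ := hxy
        obtain ⟨hyk2, hokM⟩ := hok2
        have hHor := (hHN ⟨x.1, hxk⟩ ⟨y.1, hyk⟩ (Fin.mk_lt_mk.2 hlt)).1
        have hymem : y.2 ∈ D.colBlock (pos ⟨y.1, hyk⟩) := by
          show D.col y.2 = pos ⟨y.1, hyk⟩
          rw [← hD]
          exact hyblk
        have heq := hHor x.2 hxblk y.2 hymem (rep (pos ⟨y.1, hyk⟩)) (hrepmem _)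
        exact (hMtrue _ _).1 (heq.trans hokM)
      set l2 := l.map (fun x => e x.2) with hl2
      have hl2p : l2.Pairwise G.Adj := List.pairwise_map.2 hadjl
      have hl2nd : l2.Nodup := hl2p.imp (fun h => h.ne)
      have hclique : G.IsClique (l2.toFinset : Set V) := by
        intro x hx y hy hxy
        have hx' : x ∈ l2 := by simpa using hx
        have hy' : y ∈ l2 := by simpa using hy
        exact @List.Pairwise.forall _ _ _ G.symm hl2p x hx' y hy' hxy
      have hlen : l2.toFinset.card = l.length := by
        rw [List.toFinset_card_of_nodup hl2nd, List.length_map]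
      have hb := SimpleGraph.IsClique.card_le_cliqueNum (G := G) (t := l2.toFinset)
        (tc := hclique)
      rw [hlen] at hb
      exact hb
    have hNG : ¬ ∃ f, IsGrouping Vp ok 0 m d f := by
      rintro ⟨f, hf0, hfd, hfs, hfl⟩
      have hfmono := grouping_mono_aux hfs
      have hflt : ∀ q, q < d → f q < m := by
        intro q hq
        have h1 := hfs q hq
        have h2 : f (q + 1) ≤ f d := hfmono (q + 1) d (by omega) le_rfl
        omega
      set Bq : ℕ → Fin s := fun q => if h : f q < m then pos ⟨f q, h⟩ else pos ⟨0, hm1⟩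
        with hBqdef
      have hgrplt : ∀ i : Fin s, ((Finset.Ico 1 d).filter (fun q => Bq q ≤ i)).card < d := by
        intro i
        calc ((Finset.Ico 1 d).filter (fun q => Bq q ≤ i)).card
            ≤ (Finset.Ico 1 d).card := Finset.card_filter_le _ _
          _ = d - 1 := Nat.card_Ico 1 d
          _ < d := by omega
      set grp : Fin s → Fin d :=
        fun i => ⟨((Finset.Ico 1 d).filter (fun q => Bq q ≤ i)).card, hgrplt i⟩ with hgrpdef
      have hgrpmono : Monotone grp := by
        intro i i' hii'
        show (⟨_, hgrplt i⟩ : Fin d) ≤ ⟨_, hgrplt i'⟩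
        rw [Fin.mk_le_mk]
        apply Finset.card_le_card
        intro q hq
        rw [Finset.mem_filter] at hq ⊢
        exact ⟨hq.1, le_trans hq.2 hii'⟩
      have hgrpat : ∀ (a : ℕ) (ha : a < m) (p : ℕ) (hp : p < d),
          f p ≤ a → a < f (p + 1) → grp (pos ⟨a, ha⟩) = ⟨p, hp⟩ := by
        intro a ha p hp h1 h2
        apply Fin.ext
        show ((Finset.Ico 1 d).filter (fun q => Bq q ≤ pos ⟨a, ha⟩)).card = p
        have hset : (Finset.Ico 1 d).filter (fun q => Bq q ≤ pos ⟨a, ha⟩)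
            = Finset.Ico 1 (p + 1) := by
          ext q
          simp only [Finset.mem_filter, Finset.mem_Ico]
          constructor
          · rintro ⟨⟨hq1, hq2⟩, hq3⟩
            refine ⟨hq1, ?_⟩
            have hfq : f q < m := hflt q hq2
            have hq3' : pos ⟨f q, hfq⟩ ≤ pos ⟨a, ha⟩ := by
              have hbq : Bq q = pos ⟨f q, hfq⟩ := dif_pos hfq
              rwa [hbq] at hq3
            have hfqa : f q ≤ a := pos.le_iff_le.1 hq3'
            by_contra hcon
            have : f (p + 1) ≤ f q := hfmono (p + 1) q (by omega) (by omega)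
            omega
          · rintro ⟨hq1, hq2⟩
            have hqd : q < d := by omega
            have hfq : f q < m := hflt q hqd
            refine ⟨⟨hq1, hqd⟩, ?_⟩
            have hbq : Bq q = pos ⟨f q, hfq⟩ := dif_pos hfq
            rw [hbq]
            apply pos.le_iff_le.2
            rw [Fin.mk_le_mk]
            exact le_trans (hfmono q p (by omega) (by omega)) h1
        rw [hset, Nat.card_Ico]
        omega
      have hgrpsurj : Function.Surjective grp := by
        intro p
        refine ⟨pos ⟨f p, hflt p p.isLt⟩, ?_⟩
        rw [hgrpat (f p) (hflt p p.isLt) p p.isLt le_rfl (hfs p p.isLt)]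
      set L : Division (Fintype.card V) (Fintype.card V) d := ⟨fun v => grp (D.row v), fun v => grp (D.col v),
        hgrpmono.comp D.row_mono, hgrpmono.comp D.col_mono,
        hgrpsurj.comp D.row_surj, hgrpsurj.comp D.col_surj⟩ with hLdef
      apply hno
      refine ⟨L, ⟨fun a a' h => ?_, fun b b' h => ?_⟩, ?_⟩
      · show grp (D.row a) = grp (D.row a'); rw [h]
      · show grp (D.col b) = grp (D.col b'); rw [h]
      have hLrb : ∀ (i : Fin d), L.rowBlock i = L.colBlock i := by
        intro i
        ext v
        show grp (D.row v) = i ↔ grp (D.col v) = i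
        rw [hD]
      have hmix : ∀ p q : Fin d, p < q → Mixed M (L.rowBlock p) (L.colBlock q) := by
        intro p q hpq
        have hpq' : (p : ℕ) < (q : ℕ) := hpq
        obtain ⟨a, haI, v, hVv, c, hcI, c', hc'I, hokc, hnokc'⟩ :=
          hfl (p : ℕ) (q : ℕ) hpq' q.isLt
        rw [Finset.mem_Ico] at haI hcI hc'I
        obtain ⟨hak, hablk⟩ := hVv
        obtain ⟨hck, hokcM⟩ := hokc
        have hfq1 : f ((q : ℕ) + 1) ≤ m := by
          have := hfmono ((q : ℕ) + 1) d (by omega) le_rfl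
          omega
        have hc'k : c' < m := by
          have := hc'I.2
          omega
        have hnokM : M v (rep (pos ⟨c', hc'k⟩)) = false := by
          cases hb : M v (rep (pos ⟨c', hc'k⟩))
          · rfl
          · exact absurd ⟨hc'k, hb⟩ hnokc'
        have hvR : v ∈ L.rowBlock p := by
          show grp (D.row v) = p
          rw [hablk, hgrpat a hak p p.isLt haI.1 haI.2]
        have hcC : rep (pos ⟨c, hck⟩) ∈ L.colBlock q := by
          show grp (D.col (rep (pos ⟨c, hck⟩))) = q
          rw [hrepspec, hgrpat c hck q q.isLt hcI.1 hcI.2]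
        have hc'C : rep (pos ⟨c', hc'k⟩) ∈ L.colBlock q := by
          show grp (D.col (rep (pos ⟨c', hc'k⟩))) = q
          rw [hrepspec, hgrpat c' hc'k q q.isLt hc'I.1 hc'I.2]
        have hac' : a < c' := by
          have h1 : a < f ((p : ℕ) + 1) := haI.2
          have h2 : f ((p : ℕ) + 1) ≤ f (q : ℕ) := hfmono _ _ (by omega) (by omega)
          have h3 : f (q : ℕ) ≤ c' := hc'I.1
          omega
        obtain ⟨v', hVv', hokv'⟩ := H1 a c' hac' hc'k
        obtain ⟨hak', hablk'⟩ := hVv'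
        obtain ⟨hc'k2, hokM'⟩ := hokv'
        have hv'R : v' ∈ L.rowBlock p := by
          show grp (D.row v') = p
          rw [hablk', hgrpat a hak' p p.isLt haI.1 haI.2]
        constructor
        · intro hHor
          have := hHor v hvR (rep (pos ⟨c, hck⟩)) hcC (rep (pos ⟨c', hc'k⟩)) hc'C
          rw [hokcM, hnokM] at this
          exact Bool.noConfusion this
        · intro hVer
          have := hVer (rep (pos ⟨c', hc'k⟩)) hc'C v hvR v' hv'R
          rw [hnokM, show M v' (rep (pos ⟨c', hc'k⟩)) = true from hokM'] at this
          exact Bool.noConfusion this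
      intro p q hpqne
      rcases lt_or_gt_of_ne hpqne with h | h
      · exact hmix p q h
      · have h2 := Mixed.swapSymm hMsymm (hmix q p h)
        show Mixed M (L.rowBlock p) (L.colBlock q)
        rw [hLrb p, ← hLrb q]
        exact h2
    have hω1 : 1 ≤ ω := by
      obtain ⟨v, hv⟩ := H0 0 hm1
      have hcl : G.IsClique (({e v} : Finset V) : Set V) := by
        rw [Finset.coe_singleton]
        exact Set.pairwise_singleton _ _
      have hle := SimpleGraph.IsClique.card_le_cliqueNum (G := G) (t := {e v}) (tc := hcl)
      simpa using hle
    have hcore := core Vp ok m H0 H1 (d + ω) d ω 0 m le_rfl hd hω1 le_rfl hchain hNG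
    omega
  have bound1 : (horizCompression M D).cliqueNum ≤ 2 * Nat.choose (ω + d - 2) (d - 1) := by
    show sSup {n | ∃ t, (horizCompression M D).IsNClique n t} ≤ _
    apply csSup_le
    · exact ⟨0, ⟨∅, SimpleGraph.isNClique_empty.2 rfl⟩⟩
    · rintro m ⟨t, ht⟩
      exact key m t ht
  refine ⟨bound1, ?_⟩
  rcases Nat.eq_zero_or_pos ω with hz | hpos
  · rcases Nat.eq_or_lt_of_le hd with hd1 | hd2
    · refine le_trans bound1 ?_
      rw [hz, ← hd1]
      norm_num
    · have hc0 : Nat.choose (ω + d - 2) (d - 1) = 0 := by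
        rw [hz]
        exact Nat.choose_eq_zero_of_lt (by omega)
      rw [hc0] at bound1
      exact le_trans bound1 (Nat.zero_le _)
  · refine le_trans bound1 ?_
    apply Nat.mul_le_mul_left
    have e1 : ω + d - 2 = (ω - 1) + (d - 1) := by omega
    rw [e1]
    have h := choose_add_le_pow (d - 1) (ω - 1)
    rwa [show ω - 1 + 1 = ω by omega] at h

end TwPaper
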